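/- Let a_0 > 1, let a_t ≥ 0 for t = 1, …, T, and let b > 1. Then ∑_{t=1}^T a_t / (a_0 + ∑_{i=1}^t a_i)^b ≤ 1 / ((b−1)·a_0^{b−1}). -/

import Mathlib

open Real Finset

/-- Key one-step inequality: `a/(s+a)^b ≤ (s^(1-b) - (s+a)^(1-b))/(b-1)`. -/
lemma key_step (s c b : ℝ) (hs : 0 < s) (hc : 0 ≤ c) (hb : 1 < b) :
    c / (s + c) ^ b ≤ (s ^ (1 - b) - (s + c) ^ (1 - b)) / (b - 1) := by
  set S := s + c with hSdef
  have hS : 0 < S := by positivity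
  have hBern : 1 + b * (c / s) ≤ (S / s) ^ b := by
    have hcs : (0:ℝ) ≤ c / s := div_nonneg hc hs.le
    have h := one_add_mul_self_le_rpow_one_add (s := c / s) (by linarith) hb.le
    have : (1 : ℝ) + c / s = S / s := by field_simp [hSdef]; exact hSdef.symm
    rwa [this] at h
  rw [div_le_div_iff₀ (by positivity) (by linarith)]
  have h1 : (S / s) ^ b * s = S ^ b * s ^ (1 - b) := by
    rw [div_rpow hS.le hs.le, rpow_sub hs, rpow_one]
    field_simp
  have h2 : S ^ b * S ^ (1 - b) = S := by
    rw [← rpow_add hS]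
    norm_num
  have h3 : s + b * c ≤ S ^ b * s ^ (1 - b) := by
    have := mul_le_mul_of_nonneg_right hBern hs.le
    rw [h1] at this
    have hs' : s ≠ 0 := hs.ne'
    calc s + b * c = (1 + b * (c / s)) * s := by field_simp
      _ ≤ S ^ b * s ^ (1 - b) := this
  nlinarith [h2, h3]

/-- If `a 0 > 1`, `a t ≥ 0` for `t = 1, …, T` and `b > 1`, then
`∑_{t=1}^T a t / (a 0 + ∑_{i=1}^t a i)^b ≤ 1 / ((b-1) * (a 0)^(b-1))`. -/
theorem stmt_1 (T : ℕ) (hT : 0 < T) (a : ℕ → ℝ) (ha0 : 1 < a 0)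
    (ha : ∀ t, 1 ≤ t → t ≤ T → 0 ≤ a t) (b : ℝ) (hb : 1 < b) :
    ∑ t ∈ Finset.Icc 1 T, a t / (a 0 + ∑ i ∈ Finset.Icc 1 t, a i) ^ b
      ≤ 1 / ((b - 1) * a 0 ^ (b - 1)) := by
  set S : ℕ → ℝ := fun t => a 0 + ∑ i ∈ Finset.Icc 1 t, a i with hSdef
  have ha0' : (0:ℝ) < a 0 := by linarith
  have hS0 : S 0 = a 0 := by simp [hSdef]
  have hSpos : ∀ t, t ≤ T → 0 < S t := by
    intro t ht
    have hsum : 0 ≤ ∑ i ∈ Finset.Icc 1 t, a i :=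
      Finset.sum_nonneg fun i hi => by
        rw [Finset.mem_Icc] at hi
        exact ha i hi.1 (hi.2.trans ht)
    simp only [hSdef]
    linarith
  have hstep : ∀ t, 1 ≤ t → S t = S (t - 1) + a t := by
    intro t ht
    obtain ⟨k, rfl⟩ := Nat.exists_eq_add_of_le ht
    simp only [hSdef]
    rw [show 1 + k - 1 = k from by omega, show 1 + k = k + 1 from by omega,
      Finset.sum_Icc_succ_top (by omega)]
    ring
  -- termwise bound
  have hterm : ∀ t ∈ Finset.Icc 1 T,
      a t / (S t) ^ b ≤ ((S (t-1)) ^ (1-b) - (S t) ^ (1-b)) / (b - 1) := by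
    intro t ht
    rw [Finset.mem_Icc] at ht
    have hs : 0 < S (t - 1) := hSpos _ (by omega)
    have hc : 0 ≤ a t := ha t ht.1 ht.2
    have := key_step (S (t-1)) (a t) b hs hc hb
    rwa [← hstep t ht.1] at this
  calc ∑ t ∈ Finset.Icc 1 T, a t / (S t) ^ b
      ≤ ∑ t ∈ Finset.Icc 1 T, ((S (t-1)) ^ (1-b) - (S t) ^ (1-b)) / (b - 1) :=
        Finset.sum_le_sum hterm
    _ = (∑ t ∈ Finset.range T, ((S t) ^ (1-b) - (S (t+1)) ^ (1-b))) / (b - 1) := by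
        rw [← Finset.sum_div, ← Finset.Ico_add_one_right_eq_Icc, Finset.sum_Ico_eq_sum_range]
        congr 1
        rw [show T + 1 - 1 = T from rfl]
        exact Finset.sum_congr rfl fun i _ => by
          rw [show 1 + i - 1 = i from by omega, show 1 + i = i + 1 from by omega]
    _ = ((S 0) ^ (1-b) - (S T) ^ (1-b)) / (b - 1) := by
        rw [Finset.sum_range_sub' (fun t => (S t) ^ (1-b))]
    _ ≤ (S 0) ^ (1-b) / (b - 1) := by
        apply div_le_div_of_nonneg_right ?_ (by linarith)
        have : 0 ≤ (S T) ^ (1-b) := rpow_nonneg (hSpos T le_rfl).le _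
        linarith
    _ = 1 / ((b - 1) * a 0 ^ (b - 1)) := by
        rw [hS0, show (1:ℝ) - b = -(b-1) by ring, rpow_neg ha0'.le]
        field_simp
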